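/- Let m ∈ ℕ, (n₁,…,n_m) ∈ ℕ^m (each n_k ≥ 1), and let X₁,…,X_m be Banach spaces such that X_j has cotype q_j with 2 ≤ q_j < ∞ for each j = 1,…,m. Then for every Banach space Y and every s > 0 with 1/s ≤ n₁/q₁ + ⋯ + n_m/q_m, every continuous (n₁,…,n_m)-homogeneous polynomial P : X₁ × ⋯ × X_m → Y is absolutely (s;1)-summing. -/

import Mathlib

open scoped BigOperators

/-- A sequence in a normed space is *weakly 1-summable*. -/
def WeaklySummable (𝕂 : Type*) [RCLike 𝕂] {X : Type*} [NormedAddCommGroup X]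
    [NormedSpace 𝕂 X] (x : ℕ → X) : Prop :=
  ∀ φ : X →L[𝕂] 𝕂, Summable fun j => ‖φ (x j)‖

/-- `P` is a continuous `(n 0, …, n (m-1))`-homogeneous polynomial, i.e. it comes from a
continuous multilinear map in `n 0 + ⋯ + n (m-1)` variables (`n k` copies of `X k`). -/
def IsMultiPoly (𝕂 : Type*) [RCLike 𝕂] {m : ℕ} (n : Fin m → ℕ)
    {X : Fin m → Type*} [∀ k, NormedAddCommGroup (X k)] [∀ k, NormedSpace 𝕂 (X k)]
    {Y : Type*} [NormedAddCommGroup Y] [NormedSpace 𝕂 Y]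
    (P : (∀ k, X k) → Y) : Prop :=
  ∃ T : ContinuousMultilinearMap 𝕂 (fun i : Σ k : Fin m, Fin (n k) => X i.1) Y,
    ∀ x : ∀ k, X k, P x = T fun i => x i.1

/-- A normed space has cotype `q` (Rademacher averages written as an average over signs). -/
def HasCotype (X : Type*) [NormedAddCommGroup X] (q : ℝ) : Prop :=
  ∃ C : ℝ, 0 ≤ C ∧ ∀ (k : ℕ) (x : Fin k → X),
    (∑ j, ‖x j‖ ^ q) ^ (1 / q) ≤
      C * Real.sqrt ((2 ^ k : ℝ)⁻¹ *
        ∑ ε : Fin k → Bool, ‖∑ j, (if ε j then x j else -x j)‖ ^ 2)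


lemma cotype_summing {𝕂 : Type*} [RCLike 𝕂] {X : Type*} [NormedAddCommGroup X]
    [NormedSpace 𝕂 X] {q : ℝ} (hq : 0 < q) (hcot : HasCotype X q)
    {x : ℕ → X} (hx : WeaklySummable 𝕂 x) :
    Summable fun j => ‖x j‖ ^ q := by
  obtain ⟨C, hC0, hC⟩ := hcot
  set y : (Σ N : ℕ, (Fin N → Bool)) → X :=
    fun i => ∑ j : Fin i.1, (if i.2 j then x j else -x j) with hy
  set g : (Σ N : ℕ, (Fin N → Bool)) → (StrongDual 𝕂 X) →L[𝕂] 𝕂 :=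
    fun i => NormedSpace.inclusionInDoubleDual 𝕂 X (y i) with hg
  have hpt : ∀ φ : StrongDual 𝕂 X, ∃ c, ∀ i, ‖g i φ‖ ≤ c := by
    intro φ
    refine ⟨∑' j, ‖φ (x j)‖, fun i => ?_⟩
    have hgi : g i φ = ∑ j : Fin i.1, (if i.2 j then φ (x j) else -φ (x j)) := by
      have : g i φ = φ (y i) := rfl
      rw [this, hy]
      simp only [map_sum, apply_ite φ, map_neg]
    rw [hgi]
    calc ‖∑ j : Fin i.1, (if i.2 j then φ (x j) else -φ (x j))‖
        ≤ ∑ j : Fin i.1, ‖(if i.2 j then φ (x j) else -φ (x j))‖ := norm_sum_le _ _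
      _ = ∑ j : Fin i.1, ‖φ (x (j : ℕ))‖ := by
          refine Finset.sum_congr rfl fun j _ => ?_
          split <;> simp
      _ ≤ ∑' j, ‖φ (x j)‖ := by
          rw [Fin.sum_univ_eq_sum_range (fun j => ‖φ (x j)‖)]
          exact Summable.sum_le_tsum _ (fun _ _ => norm_nonneg _) (hx φ)
  obtain ⟨C', hC'⟩ := banach_steinhaus hpt
  set W := max C' 0 with hWdef
  have hW0 : (0:ℝ) ≤ W := le_max_right _ _
  have hyW : ∀ i, ‖y i‖ ≤ W := by
    intro i
    have h1 : ‖y i‖ = ‖g i‖ := ((NormedSpace.inclusionInDoubleDualLi 𝕂).norm_map (y i)).symm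
    rw [h1]
    exact le_max_of_le_left (hC' i)
  have key : ∀ N : ℕ, ∑ j ∈ Finset.range N, ‖x j‖ ^ q ≤ (C * W) ^ q := by
    intro N
    have h1 := hC N (fun j : Fin N => x (j : ℕ))
    have h2 : ∀ ε : Fin N → Bool,
        ‖∑ j : Fin N, (if ε j then x (j:ℕ) else -x (j:ℕ))‖ ^ 2 ≤ W ^ 2 := fun ε =>
      pow_le_pow_left₀ (norm_nonneg _) (hyW ⟨N, ε⟩) 2
    have h3 : ∑ ε : Fin N → Bool, ‖∑ j : Fin N, (if ε j then x (j:ℕ) else -x (j:ℕ))‖ ^ 2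
        ≤ (2:ℝ) ^ N * W ^ 2 := by
      calc ∑ ε : Fin N → Bool, ‖∑ j : Fin N, (if ε j then x (j:ℕ) else -x (j:ℕ))‖ ^ 2
          ≤ ∑ _ε : Fin N → Bool, W ^ 2 := Finset.sum_le_sum fun ε _ => h2 ε
        _ = (2:ℝ) ^ N * W ^ 2 := by
            rw [Finset.sum_const, nsmul_eq_mul]
            congr 1
            simp [Fintype.card_fun]
    have h4 : ((2:ℝ) ^ N)⁻¹ *
        ∑ ε : Fin N → Bool, ‖∑ j : Fin N, (if ε j then x (j:ℕ) else -x (j:ℕ))‖ ^ 2 ≤ W ^ 2 := by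
      have := mul_le_mul_of_nonneg_left h3 (by positivity : (0:ℝ) ≤ ((2:ℝ) ^ N)⁻¹)
      rwa [inv_mul_cancel_left₀ (by positivity : ((2:ℝ) ^ N) ≠ 0)] at this
    have h5 : (∑ j : Fin N, ‖x (j:ℕ)‖ ^ q) ^ (1/q) ≤ C * W := by
      refine h1.trans ?_
      have hsq : Real.sqrt (((2:ℝ) ^ N)⁻¹ *
          ∑ ε : Fin N → Bool, ‖∑ j : Fin N, (if ε j then x (j:ℕ) else -x (j:ℕ))‖ ^ 2) ≤ W := by
        have := Real.sqrt_le_sqrt h4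
        rwa [Real.sqrt_sq hW0] at this
      exact mul_le_mul_of_nonneg_left hsq hC0
    have hsum0 : (0:ℝ) ≤ ∑ j : Fin N, ‖x (j:ℕ)‖ ^ q :=
      Finset.sum_nonneg fun _ _ => Real.rpow_nonneg (norm_nonneg _) q
    have h6 := Real.rpow_le_rpow (Real.rpow_nonneg hsum0 _) h5 hq.le
    rw [← Real.rpow_mul hsum0, one_div_mul_cancel hq.ne', Real.rpow_one] at h6
    rw [← Fin.sum_univ_eq_sum_range (fun j => ‖x j‖ ^ q) N]
    exact h6
  exact summable_of_sum_range_le (fun j => Real.rpow_nonneg (norm_nonneg _) q) key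

/-- If each `X_j` has cotype `q_j`, then every continuous `(n₁,…,n_m)`-homogeneous polynomial
into any Banach space `Y` is absolutely `(s;1)`-summing whenever `1/s ≤ ∑ n_k/q_k`. -/
theorem stmt3 (𝕂 : Type*) [RCLike 𝕂] (m : ℕ) (hm : 0 < m) (n : Fin m → ℕ)
    (hn : ∀ k, 1 ≤ n k) (X : Fin m → Type*) [∀ k, NormedAddCommGroup (X k)]
    [∀ k, NormedSpace 𝕂 (X k)] [∀ k, CompleteSpace (X k)]
    (q : Fin m → ℝ) (hq2 : ∀ k, 2 ≤ q k) (hcot : ∀ k, HasCotype (X k) (q k))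
    (Y : Type*) [NormedAddCommGroup Y] [NormedSpace 𝕂 Y] [CompleteSpace Y]
    (s : ℝ) (hs : 0 < s) (hs1 : 1 / s ≤ ∑ k, (n k : ℝ) / q k)
    (P : (∀ k, X k) → Y) (hP : IsMultiPoly 𝕂 n P)
    (x : ∀ k, ℕ → X k) (hx : ∀ k, WeaklySummable 𝕂 (x k)) :
    Summable fun j => ‖P fun k => x k j‖ ^ s := by
  obtain ⟨T, hT⟩ := hP
  have hq0 : ∀ k, 0 < q k := fun k => lt_of_lt_of_le two_pos (hq2 k)
  have hSk : ∀ k, Summable fun j => ‖x k j‖ ^ q k := fun k =>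
    cotype_summing (hq0 k) (hcot k) (hx k)
  set θ : Fin m → ℝ := fun k => (n k : ℝ) * s / q k with hθ
  have hθpos : ∀ k, 0 < θ k := fun k =>
    div_pos (mul_pos (by exact_mod_cast Nat.lt_of_lt_of_le Nat.zero_lt_one (hn k)) hs) (hq0 k)
  set S := ∑ k, θ k with hS
  have hS1 : (1:ℝ) ≤ S := by
    have hSeq : S = s * ∑ k, (n k : ℝ) / q k := by
      rw [hS, Finset.mul_sum]
      refine Finset.sum_congr rfl fun k _ => ?_
      rw [hθ]
      field_simp
    rw [hSeq]
    calc (1:ℝ) = s * (1/s) := by field_simp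
      _ ≤ s * ∑ k, (n k : ℝ) / q k := mul_le_mul_of_nonneg_left hs1 hs.le
  have hSpos : (0:ℝ) < S := lt_of_lt_of_le one_pos hS1
  set w : Fin m → ℝ := fun k => θ k / S with hw
  have hw0 : ∀ k, 0 ≤ w k := fun k => div_nonneg (hθpos k).le hSpos.le
  have hw1 : ∑ k, w k = 1 := by
    rw [hw]
    rw [← Finset.sum_div]
    exact div_self hSpos.ne'
  set t : ℕ → ℝ := fun j => ∑ k, w k * ‖x k j‖ ^ q k with htdef
  have htsum : Summable t := by
    apply summable_sum
    exact fun k _ => (hSk k).mul_left (w k)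
  have ht0 : ∀ j, 0 ≤ t j := fun j =>
    Finset.sum_nonneg fun k _ => mul_nonneg (hw0 k) (Real.rpow_nonneg (norm_nonneg _) _)
  set M := max (∑' j, t j) 1 with hM
  have hM1 : (1:ℝ) ≤ M := le_max_right _ _
  have htM : ∀ j, t j ≤ M := fun j =>
    le_max_of_le_left (Summable.le_tsum htsum j fun _ _ => ht0 _)
  have htS : Summable fun j => t j ^ S := by
    refine Summable.of_nonneg_of_le (fun j => Real.rpow_nonneg (ht0 j) S) (fun j => ?_)
      (htsum.mul_left (M ^ (S - 1)))
    rcases eq_or_lt_of_le (ht0 j) with h0 | h0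
    · rw [← h0, Real.zero_rpow hSpos.ne']
      positivity
    · have hsplit : t j ^ S = t j ^ (S - 1) * t j := by
        have h := Real.rpow_add h0 (S - 1) 1
        rw [Real.rpow_one, show S - 1 + 1 = S from by ring] at h
        exact h
      rw [hsplit]
      exact mul_le_mul_of_nonneg_right
        (Real.rpow_le_rpow h0.le (htM j) (by linarith)) h0.le
  refine Summable.of_nonneg_of_le (fun j => Real.rpow_nonneg (norm_nonneg _) s) (fun j => ?_)
    (htS.mul_left (‖T‖ ^ s))
  have hprodeq : ∏ i : (Σ k : Fin m, Fin (n k)), ‖x i.1 j‖ = ∏ k, ‖x k j‖ ^ (n k) := by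
    rw [← Finset.univ_sigma_univ, Finset.prod_sigma]
    simp
    exact Finset.prod_congr rfl fun k _ => by
      show ∏ _i : Fin (n k), ‖x k j‖ = _
      exact Fin.prod_const _ _
  have hPle : ‖P fun k => x k j‖ ≤ ‖T‖ * ∏ k, ‖x k j‖ ^ (n k) := by
    rw [hT, ← hprodeq]
    exact T.le_opNorm _
  have hprod0 : ∀ k, (0:ℝ) ≤ ‖x k j‖ ^ (n k) := fun k => pow_nonneg (norm_nonneg _) _
  have h1 : ‖P fun k => x k j‖ ^ s ≤ (‖T‖ * ∏ k, ‖x k j‖ ^ (n k)) ^ s :=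
    Real.rpow_le_rpow (norm_nonneg _) hPle hs.le
  have h2 : (‖T‖ * ∏ k, ‖x k j‖ ^ (n k)) ^ s = ‖T‖ ^ s * (∏ k, ‖x k j‖ ^ (n k)) ^ s :=
    Real.mul_rpow (norm_nonneg T) (Finset.prod_nonneg fun k _ => hprod0 k)
  have h3 : (∏ k, ‖x k j‖ ^ (n k)) ^ s = ∏ k, (‖x k j‖ ^ q k) ^ θ k := by
    rw [← Real.finset_prod_rpow _ _ (fun k _ => hprod0 k) s]
    refine Finset.prod_congr rfl fun k _ => ?_
    rw [← Real.rpow_natCast ‖x k j‖ (n k), ← Real.rpow_mul (norm_nonneg _),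
      ← Real.rpow_mul (norm_nonneg _)]
    congr 1
    show (n k : ℝ) * s = q k * θ k
    rw [hθ]
    show (n k : ℝ) * s = q k * ((n k : ℝ) * s / q k)
    rw [mul_comm (q k), div_mul_cancel₀ _ (hq0 k).ne']
  have h4 : ∏ k, (‖x k j‖ ^ q k) ^ θ k = (∏ k, (‖x k j‖ ^ q k) ^ w k) ^ S := by
    rw [← Real.finset_prod_rpow _ _
      (fun k _ => Real.rpow_nonneg (Real.rpow_nonneg (norm_nonneg _) _) _) S]
    refine Finset.prod_congr rfl fun k _ => ?_
    rw [← Real.rpow_mul (Real.rpow_nonneg (norm_nonneg _) _)]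
    congr 1
    rw [hw, div_mul_cancel₀ _ hSpos.ne']
  have h5 : ∏ k, (‖x k j‖ ^ q k) ^ w k ≤ t j := by
    rw [htdef]
    exact Real.geom_mean_le_arith_mean_weighted Finset.univ w (fun k => ‖x k j‖ ^ q k)
      (fun k _ => hw0 k) hw1 (fun k _ => Real.rpow_nonneg (norm_nonneg _) _)
  have h6 : (∏ k, (‖x k j‖ ^ q k) ^ w k) ^ S ≤ t j ^ S :=
    Real.rpow_le_rpow
      (Finset.prod_nonneg fun k _ =>
        Real.rpow_nonneg (Real.rpow_nonneg (norm_nonneg _) _) _) h5 hSpos.le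
  calc ‖P fun k => x k j‖ ^ s ≤ (‖T‖ * ∏ k, ‖x k j‖ ^ (n k)) ^ s := h1
    _ = ‖T‖ ^ s * (∏ k, ‖x k j‖ ^ (n k)) ^ s := h2
    _ = ‖T‖ ^ s * (∏ k, (‖x k j‖ ^ q k) ^ w k) ^ S := by rw [h3, h4]
    _ ≤ ‖T‖ ^ s * t j ^ S :=
        mul_le_mul_of_nonneg_left h6 (Real.rpow_nonneg (norm_nonneg T) s)
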